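/- Let b₀₂, b₂₀, a₂₁ ∈ ℝ. Set Ã(x) = 1 − (b₀₂ + 2b₂₀)·x − a₂₁·x² − (b₂₀·a₂₁ − b₀₂·b₂₀² − 4·b₂₀³)·x³, B̃(x) = x + b₂₀·x², C̃(x) = b₀₂ + (a₂₁ + b₀₂·b₂₀ + 4·b₂₀²)·x + (2·b₂₀·a₂₁ − 2·b₀₂·b₂₀² − 8·b₂₀³)·x², and define f(x) = −(Ã′(x) − C̃(x))/Ã(x), g(x) = Ã(x)·B̃(x). Then there is a neighborhood of 0 on which g′(x) + f(x)·g(x) = 1 for all x. -/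

import Mathlib

/-- Zero-Urabe-function isochronicity identity: with `Ã`, `B̃`, `C̃` as below and the
Liénard data `f(x) = −(Ã′(x) − C̃(x))/Ã(x)`, `g(x) = Ã(x)·B̃(x)`, the identity
`g′(x) + f(x)·g(x) = 1` holds on a neighborhood of `0`. -/
theorem stmt_9 (b02 b20 a21 : ℝ) (A B C f g : ℝ → ℝ)
    (hA : ∀ x : ℝ, A x = 1 - (b02 + 2*b20)*x - a21*x^2 - (b20*a21 - b02*b20^2 - 4*b20^3)*x^3)
    (hB : ∀ x : ℝ, B x = x + b20*x^2)
    (hC : ∀ x : ℝ, C x = b02 + (a21 + b02*b20 + 4*b20^2)*x + (2*b20*a21 - 2*b02*b20^2 - 8*b20^3)*x^2)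
    (hf : ∀ x : ℝ, f x = -(deriv A x - C x) / A x)
    (hg : ∀ x : ℝ, g x = A x * B x) :
    ∃ ε > (0 : ℝ), ∀ x : ℝ, |x| < ε → deriv g x + f x * g x = 1 := by
  have hAfun : A = fun x => 1 - (b02 + 2*b20)*x - a21*x^2 - (b20*a21 - b02*b20^2 - 4*b20^3)*x^3 :=
    funext hA
  have hBfun : B = fun x => x + b20*x^2 := funext hB
  have hgfun : g = fun x => A x * B x := funext hg
  have hAder : ∀ x : ℝ, HasDerivAt A
      (-(b02+2*b20) - a21*(2*x) - (b20*a21 - b02*b20^2 - 4*b20^3)*(3*x^2)) x := by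
    intro x
    rw [hAfun]
    have h1 : HasDerivAt (fun x:ℝ => x) 1 x := hasDerivAt_id x
    have h2 : HasDerivAt (fun x:ℝ => x^2) (2*x) x := by simpa using hasDerivAt_pow 2 x
    have h3 : HasDerivAt (fun x:ℝ => x^3) (3*x^2) x := by
      simpa using hasDerivAt_pow 3 x
    have h := (((hasDerivAt_const x (1:ℝ)).sub (h1.const_mul (b02+2*b20))).sub
      (h2.const_mul a21)).sub (h3.const_mul (b20*a21 - b02*b20^2 - 4*b20^3))
    refine h.congr_deriv ?_
    ring
  have hBder : ∀ x : ℝ, HasDerivAt B (1 + b20*(2*x)) x := by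
    intro x
    rw [hBfun]
    have h2 : HasDerivAt (fun x:ℝ => x^2) (2*x) x := by simpa using hasDerivAt_pow 2 x
    exact (hasDerivAt_id x).add (h2.const_mul b20)
  have hgder : ∀ x : ℝ, deriv g x
      = (-(b02+2*b20) - a21*(2*x) - (b20*a21 - b02*b20^2 - 4*b20^3)*(3*x^2)) * B x
        + A x * (1 + b20*(2*x)) := by
    intro x
    rw [hgfun]
    exact ((hAder x).mul (hBder x)).deriv
  have hcont : ContinuousAt A 0 := by
    rw [hAfun]; fun_prop
  have hne : ∀ᶠ x in nhds (0:ℝ), A x ≠ 0 := hcont.eventually_ne (by rw [hA 0]; norm_num)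
  rw [Metric.eventually_nhds_iff] at hne
  obtain ⟨ε, hε, h⟩ := hne
  refine ⟨ε, hε, fun x hx => ?_⟩
  have hAx : A x ≠ 0 := h (by simpa [Real.dist_eq] using hx)
  rw [hgder x, hf x, hg x, (hAder x).deriv]
  rw [hA x] at hAx ⊢
  rw [hB x, hC x]
  rw [(show ∀ a N M : ℝ, a ≠ 0 → N / a * (a * M) = N * M from fun a N M ha => by field_simp) _ _ _ hAx]
  ring
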